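/- Let W be a unitary operator on a finite-dimensional Hilbert space with eigenvalues e^{ic_1}, ..., e^{ic_n} where 0 = c_1 ≤ c_2 ≤ ... ≤ c_n < π (all eigenvalues lie in the closed upper semicircle with 1 an eigenvalue). Then D(1,W) = sin(c_n/2), i.e., min over unit ψ of |⟨ψ, Wψ⟩| = cos(c_n/2). -/

import Mathlib

open scoped InnerProductSpace

variable {H : Type*} [NormedAddCommGroup H] [InnerProductSpace ℂ H] [FiniteDimensional ℂ H]

noncomputable def Dpsi (U V : H →L[ℂ] H) (ψ : H) : ℝ :=
  Real.sqrt (1 - ‖⟪ψ, (star U * V) ψ⟫_ℂ‖ ^ 2)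

noncomputable def uDist (U V : H →L[ℂ] H) : ℝ :=
  sSup {d : ℝ | ∃ ψ : H, ‖ψ‖ = 1 ∧ d = Dpsi U V ψ}

lemma aux_inner_formula {n : ℕ} (W : H →L[ℂ] H)
    (b : OrthonormalBasis (Fin (n + 1)) ℂ H) (c : Fin (n + 1) → ℝ)
    (heig : ∀ k, W (b k) = Complex.exp ((c k : ℂ) * Complex.I) • b k)
    (ψ : H) :
    ⟪ψ, W ψ⟫_ℂ = ∑ i, (‖b.repr ψ i‖^2 : ℂ) * Complex.exp ((c i : ℂ) * Complex.I) := by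
  have hWψ : W ψ = ∑ i, (b.repr ψ i * Complex.exp ((c i : ℂ) * Complex.I)) • b i := by
    conv_lhs => rw [← b.sum_repr ψ]
    rw [map_sum]
    refine Finset.sum_congr rfl fun i _ => ?_
    rw [map_smul, heig, smul_smul]
  rw [hWψ, inner_sum]
  refine Finset.sum_congr rfl fun i _ => ?_
  rw [inner_smul_right, ← inner_conj_symm, ← b.repr_apply_apply]
  rw [show b.repr ψ i * Complex.exp ((c i : ℂ) * Complex.I) * (starRingEnd ℂ) (b.repr ψ i)
      = (b.repr ψ i * (starRingEnd ℂ) (b.repr ψ i)) * Complex.exp ((c i : ℂ) * Complex.I) by ring,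
    Complex.mul_conj']

lemma aux_sum_sq {n : ℕ} (b : OrthonormalBasis (Fin (n + 1)) ℂ H) (ψ : H) (hψ : ‖ψ‖ = 1) :
    ∑ i, ‖b.repr ψ i‖ ^ 2 = 1 := by
  have h1 : ‖b.repr ψ‖ = 1 := by rw [b.repr.norm_map, hψ]
  rw [EuclideanSpace.norm_eq, Real.sqrt_eq_one] at h1
  exact h1

-- main bounds
lemma aux_bounds {n : ℕ} (W : H →L[ℂ] H)
    (b : OrthonormalBasis (Fin (n + 1)) ℂ H) (c : Fin (n + 1) → ℝ)
    (hmono : Monotone c) (h0 : c 0 = 0) (hπ : c (Fin.last n) < Real.pi)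
    (heig : ∀ k, W (b k) = Complex.exp ((c k : ℂ) * Complex.I) • b k)
    (ψ : H) (hψ : ‖ψ‖ = 1) :
    Real.cos (c (Fin.last n) / 2) ≤ ‖⟪ψ, W ψ⟫_ℂ‖ ∧ ‖⟪ψ, W ψ⟫_ℂ‖ ≤ 1 := by
  set θ := c (Fin.last n) with hθ
  have hθ0 : 0 ≤ θ := h0 ▸ hmono (Fin.zero_le _)
  have hform := aux_inner_formula W b c heig ψ
  have hsum := aux_sum_sq b ψ hψ
  set p : Fin (n+1) → ℝ := fun i => ‖b.repr ψ i‖ ^ 2 with hp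
  have hform' : ⟪ψ, W ψ⟫_ℂ = ∑ i, ((p i : ℝ) : ℂ) * Complex.exp ((c i : ℂ) * Complex.I) :=
    hform.trans (by simp only [hp]; push_cast; rfl)
  clear hform
  constructor
  · -- lower bound
    have key : Real.cos (θ/2) ≤ (Complex.exp ((-(θ/2) : ℝ) * Complex.I) * ⟪ψ, W ψ⟫_ℂ).re := by
      rw [hform', Finset.mul_sum, Complex.re_sum]
      have hterm : ∀ i, (Complex.exp ((-(θ/2) : ℝ) * Complex.I) *
          ((p i : ℂ) * Complex.exp ((c i : ℂ) * Complex.I))).re = p i * Real.cos (c i - θ/2) := by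
        intro i
        rw [show Complex.exp ((-(θ/2) : ℝ) * Complex.I) * ((p i : ℂ) * Complex.exp ((c i : ℂ) * Complex.I))
            = (p i : ℂ) * Complex.exp (((c i - θ/2 : ℝ) : ℂ) * Complex.I) by
          rw [show ((c i - θ/2 : ℝ) : ℂ) * Complex.I
              = ((-(θ/2) : ℝ) : ℂ) * Complex.I + ((c i : ℝ) : ℂ) * Complex.I by push_cast; ring,
            Complex.exp_add]
          ring]
        rw [Complex.re_ofReal_mul, Complex.exp_ofReal_mul_I_re]
      calc Real.cos (θ/2) = ∑ i, p i * Real.cos (θ/2) := by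
            rw [← Finset.sum_mul, hsum, one_mul]
        _ ≤ ∑ i, p i * Real.cos (c i - θ/2) := by
            refine Finset.sum_le_sum fun i _ => ?_
            refine mul_le_mul_of_nonneg_left ?_ (by positivity)
            have hci0 : 0 ≤ c i := h0 ▸ hmono (Fin.zero_le _)
            have hciθ : c i ≤ θ := hmono (Fin.le_last i)
            rw [← Real.cos_abs (c i - θ/2)]
            refine Real.cos_le_cos_of_nonneg_of_le_pi (abs_nonneg _) (by linarith) ?_
            rw [abs_le]; constructor <;> linarith
        _ = _ := Finset.sum_congr rfl fun i _ => (hterm i).symm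
    calc Real.cos (θ/2) ≤ (Complex.exp ((-(θ/2) : ℝ) * Complex.I) * ⟪ψ, W ψ⟫_ℂ).re := key
      _ ≤ ‖Complex.exp ((-(θ/2) : ℝ) * Complex.I) * ⟪ψ, W ψ⟫_ℂ‖ :=
          Complex.re_le_norm _
      _ = ‖⟪ψ, W ψ⟫_ℂ‖ := by
          rw [norm_mul, Complex.norm_exp_ofReal_mul_I, one_mul]
  · rw [hform']
    calc ‖∑ i, (p i : ℂ) * Complex.exp ((c i : ℂ) * Complex.I)‖
        ≤ ∑ i, ‖(p i : ℂ) * Complex.exp ((c i : ℂ) * Complex.I)‖ := norm_sum_le _ _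
      _ = ∑ i, p i := by
          refine Finset.sum_congr rfl fun i _ => ?_
          rw [norm_mul, Complex.norm_exp_ofReal_mul_I, mul_one, Complex.norm_real,
            Real.norm_of_nonneg (by positivity)]
      _ = 1 := hsum

lemma aux_half (θ : ℝ) :
    (1 : ℂ) + Complex.exp ((θ : ℂ) * Complex.I)
      = Complex.exp (((θ/2 : ℝ) : ℂ) * Complex.I) * ((2 * Real.cos (θ/2) : ℝ) : ℂ) := by
  have hc : Real.cos θ = 2 * Real.cos (θ/2)^2 - 1 := by
    have := Real.cos_sq (θ/2); rw [show 2*(θ/2) = θ by ring] at this; linarith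
  have hs : Real.sin θ = 2 * Real.sin (θ/2) * Real.cos (θ/2) := by
    have := Real.sin_two_mul (θ/2); rw [show 2*(θ/2) = θ by ring] at this; linarith
  apply Complex.ext
  · simp only [Complex.add_re, Complex.one_re, Complex.mul_re, Complex.ofReal_re,
      Complex.ofReal_im, Complex.exp_ofReal_mul_I_re, Complex.exp_ofReal_mul_I_im]
    nlinarith
  · simp only [Complex.add_im, Complex.one_im, Complex.mul_im, Complex.ofReal_re,
      Complex.ofReal_im, Complex.exp_ofReal_mul_I_re, Complex.exp_ofReal_mul_I_im]
    nlinarith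

lemma aux_witness {n : ℕ} (W : H →L[ℂ] H)
    (b : OrthonormalBasis (Fin (n + 1)) ℂ H) (c : Fin (n + 1) → ℝ)
    (hmono : Monotone c) (h0 : c 0 = 0) (hπ : c (Fin.last n) < Real.pi)
    (heig : ∀ k, W (b k) = Complex.exp ((c k : ℂ) * Complex.I) • b k) :
    ∃ ψ : H, ‖ψ‖ = 1 ∧ ‖⟪ψ, W ψ⟫_ℂ‖ = Real.cos (c (Fin.last n) / 2) := by
  have hθ0 : 0 ≤ c (Fin.last n) := h0 ▸ hmono (Fin.zero_le _)
  have hcosnn : 0 ≤ Real.cos (c (Fin.last n) / 2) := by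
    apply Real.cos_nonneg_of_mem_Icc
    constructor <;> [linarith [Real.pi_pos]; linarith]
  have honb := orthonormal_iff_ite.mp b.orthonormal
  rcases n with _ | m
  · refine ⟨b 0, ?_, ?_⟩
    · have := honb 0 0; simpa using b.orthonormal.1 0
    · have hlast : (Fin.last 0) = 0 := rfl
      rw [heig, hlast, h0]
      simp [inner_smul_right, honb 0 0]
  · set θ := c (Fin.last (m+1)) with hθdef
    have hne : (0 : Fin (m+2)) ≠ Fin.last (m+1) := by
      rw [Fin.ne_iff_vne]; simp [Fin.last]
    set κ : ℝ := (Real.sqrt 2)⁻¹ with hκ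
    have h2 : (0:ℝ) < Real.sqrt 2 := Real.sqrt_pos.mpr (by norm_num)
    refine ⟨(κ : ℂ) • (b 0 + b (Fin.last (m+1))), ?_, ?_⟩
    · have hnsq : ‖b 0 + b (Fin.last (m+1))‖^2 = 2 := by
        rw [norm_add_sq (𝕜 := ℂ)]
        have h00 := honb 0 0
        have h0l := honb 0 (Fin.last (m+1))
        simp only [if_pos rfl, if_neg hne] at h00 h0l
        rw [h0l]
        have hn1 : ‖b 0‖ = 1 := b.orthonormal.1 0
        have hn2 : ‖b (Fin.last (m+1))‖ = 1 := b.orthonormal.1 _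
        simp only [hn1, hn2, map_zero]
        norm_num
      have : ‖b 0 + b (Fin.last (m+1))‖ = Real.sqrt 2 := by
        rw [← Real.sqrt_sq (norm_nonneg _), hnsq]
      rw [norm_smul, this, Complex.norm_real, Real.norm_of_nonneg (by positivity)]
      exact inv_mul_cancel₀ (ne_of_gt h2)
    · have hW0 : W (b 0) = b 0 := by rw [heig, h0]; simp
      have hinner : ⟪(κ : ℂ) • (b 0 + b (Fin.last (m+1))),
          W ((κ : ℂ) • (b 0 + b (Fin.last (m+1))))⟫_ℂ
          = ((κ:ℝ)^2 : ℝ) * ((1:ℂ) + Complex.exp ((θ : ℂ) * Complex.I)) := by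
        rw [map_smul, map_add, hW0, heig, ← hθdef]
        rw [inner_smul_left, inner_smul_right, Complex.conj_ofReal]
        rw [inner_add_left, inner_add_right, inner_add_right,
          inner_smul_right, inner_smul_right]
        have h00 := honb 0 0
        have h0l := honb 0 (Fin.last (m+1))
        have hl0 := honb (Fin.last (m+1)) 0
        have hll := honb (Fin.last (m+1)) (Fin.last (m+1))
        simp only [if_pos rfl, if_neg hne, if_neg (Ne.symm hne)] at h00 h0l hl0 hll
        rw [h00, h0l, hl0, hll]
        push_cast
        ring
      rw [hinner, aux_half θ]
      have hκ2 : (κ:ℝ)^2 = 1/2 := by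
        rw [hκ, ← Real.sqrt_inv]
        rw [Real.sq_sqrt (by norm_num)]
        norm_num
      rw [norm_mul, norm_mul, Complex.norm_exp_ofReal_mul_I]
      rw [Complex.norm_real, Complex.norm_real, Real.norm_of_nonneg (by positivity),
        Real.norm_of_nonneg (by linarith), hκ2]
      ring

theorem stmt_5 {n : ℕ} (W : H →L[ℂ] H) (hW : W ∈ unitary (H →L[ℂ] H))
    (b : OrthonormalBasis (Fin (n + 1)) ℂ H) (c : Fin (n + 1) → ℝ)
    (hmono : Monotone c) (h0 : c 0 = 0) (hπ : c (Fin.last n) < Real.pi)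
    (heig : ∀ k, W (b k) = Complex.exp ((c k : ℂ) * Complex.I) • b k) :
    uDist 1 W = Real.sin (c (Fin.last n) / 2) ∧
      sInf {r : ℝ | ∃ ψ : H, ‖ψ‖ = 1 ∧ r = ‖⟪ψ, W ψ⟫_ℂ‖} =
        Real.cos (c (Fin.last n) / 2) := by
  have hbd := aux_bounds W b c hmono h0 hπ heig
  obtain ⟨ψ₀, hψ₀, hv⟩ := aux_witness W b c hmono h0 hπ heig
  set θ := c (Fin.last n) with hθdef
  have hθ0 : 0 ≤ θ := h0 ▸ hmono (Fin.zero_le _)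
  have hcosnn : 0 ≤ Real.cos (θ/2) := by
    apply Real.cos_nonneg_of_mem_Icc
    constructor <;> [linarith [Real.pi_pos]; linarith]
  have hsinnn : 0 ≤ Real.sin (θ/2) := by
    apply Real.sin_nonneg_of_nonneg_of_le_pi <;> linarith [Real.pi_pos]
  have hpyth : Real.sin (θ/2)^2 + Real.cos (θ/2)^2 = 1 := Real.sin_sq_add_cos_sq _
  have hDpsi : ∀ ψ : H, Dpsi 1 W ψ = Real.sqrt (1 - ‖⟪ψ, W ψ⟫_ℂ‖^2) := by
    intro ψ; rw [Dpsi, star_one, one_mul]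
  have hDval : Dpsi 1 W ψ₀ = Real.sin (θ/2) := by
    rw [hDpsi, hv, show 1 - Real.cos (θ/2)^2 = Real.sin (θ/2)^2 by linarith,
      Real.sqrt_sq hsinnn]
  have hub : ∀ d ∈ {d : ℝ | ∃ ψ : H, ‖ψ‖ = 1 ∧ d = Dpsi 1 W ψ}, d ≤ Real.sin (θ/2) := by
    rintro d ⟨ψ, hψ, rfl⟩
    rw [hDpsi]
    obtain ⟨h1, h2⟩ := hbd ψ hψ
    calc Real.sqrt (1 - ‖⟪ψ, W ψ⟫_ℂ‖^2) ≤ Real.sqrt (Real.sin (θ/2)^2) := by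
          apply Real.sqrt_le_sqrt; nlinarith
      _ = Real.sin (θ/2) := Real.sqrt_sq hsinnn
  have hlb : ∀ r ∈ {r : ℝ | ∃ ψ : H, ‖ψ‖ = 1 ∧ r = ‖⟪ψ, W ψ⟫_ℂ‖},
      Real.cos (θ/2) ≤ r := by
    rintro r ⟨ψ, hψ, rfl⟩
    exact (hbd ψ hψ).1
  constructor
  · rw [uDist]
    apply le_antisymm
    · exact csSup_le ⟨_, ψ₀, hψ₀, rfl⟩ hub
    · exact le_csSup ⟨_, hub⟩ ⟨ψ₀, hψ₀, hDval.symm⟩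
  · apply le_antisymm
    · exact csInf_le ⟨_, hlb⟩ ⟨ψ₀, hψ₀, hv.symm⟩
    · exact le_csInf ⟨_, ψ₀, hψ₀, hv.symm⟩ hlb
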